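/- Let D_{k+1} = W_{k+1} − W_k be the martingale differences of the directed polymer partition function. Then the conditional variance given G_k satisfies E[D_{k+1}² | G_k] = κ₂ · P^{⊗2}[ e^{h_k(S)} e^{h_k(S̃)} 1{S_k = S̃_k} ], where κ₂ = e^{λ₂} − 1 and h_k(S) = Σ_{i=0}^{k-1} (β η(i, S_i) − λ(β)). -/

import Mathlib

open MeasureTheory ProbabilityTheory Filter
open scoped ENNReal NNReal

set_option linter.unusedSectionVars false
set_option linter.unusedVariables false
set_option maxHeartbeats 1000000

noncomputable section

lemma integral_eq_sum_of_ae_finset {X : Type*} [MeasurableSpace X] [MeasurableSingletonClass X]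
    (ρ : Measure X) [IsFiniteMeasure ρ] (T : Finset X) (hT : ρ ((↑T : Set X)ᶜ) = 0)
    (f : X → ℝ) :
    ∫ x, f x ∂ρ = ∑ x ∈ T, (ρ {x}).toReal * f x := by
  rw [← setIntegral_eq_integral_of_ae_compl_eq_zero (s := (↑T : Set X)) ?h]
  · rw [integral_finset _ IntegrableOn.finset]
    simp [smul_eq_mul, Measure.real]
  case h =>
    have h1 : ∀ᵐ x ∂ρ, x ∈ (T : Set X) := by
      rw [ae_iff]
      exact hT
    filter_upwards [h1] with x hx hx'
    exact absurd hx hx'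

variable {d : ℕ} {Ω : Type} [MeasurableSpace Ω] {μ : Measure Ω} [IsProbabilityMeasure μ]
  {η : ℕ → (Fin d → ℤ) → Ω → ℝ}

lemma aux_intb (hηmeas : ∀ t x, Measurable (η t x))
    (hηid : ∀ t x, Measure.map (η t x) μ = Measure.map (η 0 0) μ)
    (hηexp : ∀ b : ℝ, Integrable (fun ω => Real.exp (b * η 0 0 ω)) μ)
    (bc : ℝ) (t : ℕ) (x : Fin d → ℤ) :
    Integrable (fun ω => Real.exp (bc * η t x ω)) μ := by
  have hg : Measurable fun y : ℝ => Real.exp (bc * y) := (measurable_id.const_mul bc).exp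
  have h1 : Integrable (fun y => Real.exp (bc * y)) (Measure.map (η t x) μ) := by
    rw [hηid t x]
    exact (integrable_map_measure hg.aestronglyMeasurable (hηmeas 0 0).aemeasurable).mpr
      (hηexp bc)
  exact (integrable_map_measure hg.aestronglyMeasurable (hηmeas t x).aemeasurable).mp h1

lemma aux_Eexp (hηmeas : ∀ t x, Measurable (η t x))
    (hηid : ∀ t x, Measure.map (η t x) μ = Measure.map (η 0 0) μ)
    (hηexp : ∀ b : ℝ, Integrable (fun ω => Real.exp (b * η 0 0 ω)) μ)
    (lam : ℝ → ℝ) (hlam : ∀ b, lam b = Real.log (∫ ω, Real.exp (b * η 0 0 ω) ∂μ))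
    (bc : ℝ) (t : ℕ) (x : Fin d → ℤ) :
    ∫ ω, Real.exp (bc * η t x ω) ∂μ = Real.exp (lam bc) := by
  have hg : Measurable fun y : ℝ => Real.exp (bc * y) := (measurable_id.const_mul bc).exp
  have h1 : ∫ ω, Real.exp (bc * η t x ω) ∂μ
      = ∫ y, Real.exp (bc * y) ∂(Measure.map (η t x) μ) :=
    (integral_map (hηmeas t x).aemeasurable hg.aestronglyMeasurable).symm
  rw [h1, hηid t x, integral_map (hηmeas 0 0).aemeasurable hg.aestronglyMeasurable,
    hlam bc, Real.exp_log]
  exact integral_exp_pos (hηexp bc)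

lemma aux_intExp (hηmeas : ∀ t x, Measurable (η t x))
    (hηindep : iIndepFun
      (fun p : ℕ × (Fin d → ℤ) => η p.1 p.2) μ)
    (hηid : ∀ t x, Measure.map (η t x) μ = Measure.map (η 0 0) μ)
    (hηexp : ∀ b : ℝ, Integrable (fun ω => Real.exp (b * η 0 0 ω)) μ)
    (s : Finset (ℕ × (Fin d → ℤ))) (c : ℕ × (Fin d → ℤ) → ℝ) :
    Integrable (fun ω => Real.exp (∑ p ∈ s, c p * η p.1 p.2 ω)) μ := by
  have hX : iIndepFun
      (fun p : ℕ × (Fin d → ℤ) => fun ω => c p * η p.1 p.2 ω) μ :=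
    hηindep.comp (fun p y => c p * y) (fun p => measurable_id.const_mul (c p))
  have h2 := hX.integrable_exp_mul_sum (t := 1)
    (fun p => (hηmeas p.1 p.2).const_mul (c p)) (s := s)
    (fun p _ => by simpa using aux_intb hηmeas hηid hηexp (c p) p.1 p.2)
  simpa [Finset.sum_apply] using h2

lemma aux_intshift (hηmeas : ∀ t x, Measurable (η t x))
    (hηid : ∀ t x, Measure.map (η t x) μ = Measure.map (η 0 0) μ)
    (hηexp : ∀ b : ℝ, Integrable (fun ω => Real.exp (b * η 0 0 ω)) μ)
    (bc r : ℝ) (t : ℕ) (x : Fin d → ℤ) :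
    Integrable (fun ω => Real.exp (bc * η t x ω - r)) μ := by
  have h : (fun ω => Real.exp (bc * η t x ω - r))
      = fun ω => Real.exp (-r) * Real.exp (bc * η t x ω) := by
    funext ω; rw [← Real.exp_add]; ring_nf
  rw [h]
  exact (aux_intb hηmeas hηid hηexp bc t x).const_mul _

lemma aux_Eshift (hηmeas : ∀ t x, Measurable (η t x))
    (hηid : ∀ t x, Measure.map (η t x) μ = Measure.map (η 0 0) μ)
    (hηexp : ∀ b : ℝ, Integrable (fun ω => Real.exp (b * η 0 0 ω)) μ)
    (lam : ℝ → ℝ) (hlam : ∀ b, lam b = Real.log (∫ ω, Real.exp (b * η 0 0 ω) ∂μ))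
    (bc r : ℝ) (t : ℕ) (x : Fin d → ℤ) :
    ∫ ω, Real.exp (bc * η t x ω - r) ∂μ = Real.exp (lam bc - r) := by
  have h : (fun ω => Real.exp (bc * η t x ω - r))
      = fun ω => Real.exp (-r) * Real.exp (bc * η t x ω) := by
    funext ω; rw [← Real.exp_add]; ring_nf
  rw [h, integral_const_mul, aux_Eexp hηmeas hηid hηexp lam hlam bc t x, ← Real.exp_add]
  ring_nf

lemma aux_intg (hηmeas : ∀ t x, Measurable (η t x))
    (hηid : ∀ t x, Measure.map (η t x) μ = Measure.map (η 0 0) μ)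
    (hηexp : ∀ b : ℝ, Integrable (fun ω => Real.exp (b * η 0 0 ω)) μ)
    (bc r : ℝ) (t : ℕ) (x : Fin d → ℤ) :
    Integrable (fun ω => Real.exp (bc * η t x ω - r) - 1) μ :=
  (aux_intshift hηmeas hηid hηexp bc r t x).sub (integrable_const 1)

lemma aux_Eg1 (hηmeas : ∀ t x, Measurable (η t x))
    (hηid : ∀ t x, Measure.map (η t x) μ = Measure.map (η 0 0) μ)
    (hηexp : ∀ b : ℝ, Integrable (fun ω => Real.exp (b * η 0 0 ω)) μ)
    (lam : ℝ → ℝ) (hlam : ∀ b, lam b = Real.log (∫ ω, Real.exp (b * η 0 0 ω) ∂μ))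
    (β : ℝ) (t : ℕ) (x : Fin d → ℤ) :
    ∫ ω, (Real.exp (β * η t x ω - lam β) - 1) ∂μ = 0 := by
  rw [integral_sub (aux_intshift hηmeas hηid hηexp β (lam β) t x) (integrable_const 1),
    aux_Eshift hηmeas hηid hηexp lam hlam β (lam β) t x, integral_const]
  simp

lemma aux_Eg (hηmeas : ∀ t x, Measurable (η t x))
    (hηindep : iIndepFun
      (fun p : ℕ × (Fin d → ℤ) => η p.1 p.2) μ)
    (hηid : ∀ t x, Measure.map (η t x) μ = Measure.map (η 0 0) μ)
    (hηexp : ∀ b : ℝ, Integrable (fun ω => Real.exp (b * η 0 0 ω)) μ)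
    (lam : ℝ → ℝ) (hlam : ∀ b, lam b = Real.log (∫ ω, Real.exp (b * η 0 0 ω) ∂μ))
    (β : ℝ) (lam2 : ℝ) (hlam2 : lam2 = lam (2 * β) - 2 * lam β)
    (κ2 : ℝ) (hκ2 : κ2 = Real.exp lam2 - 1)
    (k : ℕ) (a b' : Fin d → ℤ) :
    ∫ ω, (Real.exp (β * η k a ω - lam β) - 1) * (Real.exp (β * η k b' ω - lam β) - 1) ∂μ
      = κ2 * (if a = b' then 1 else 0) := by
  by_cases hab : a = b'
  · subst hab
    simp only [if_true, mul_one]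
    have hfun : (fun ω => (Real.exp (β * η k a ω - lam β) - 1)
          * (Real.exp (β * η k a ω - lam β) - 1))
        = fun ω => Real.exp (2 * β * η k a ω - 2 * lam β)
            - 2 * Real.exp (β * η k a ω - lam β) + 1 := by
      funext ω
      have h2 : Real.exp (2 * β * η k a ω - 2 * lam β)
          = Real.exp (β * η k a ω - lam β) * Real.exp (β * η k a ω - lam β) := by
        rw [← Real.exp_add]; ring_nf
      rw [h2]; ring
    rw [show (∫ ω, (Real.exp (β * η k a ω - lam β) - 1)
          * (Real.exp (β * η k a ω - lam β) - 1) ∂μ)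
        = ∫ ω, (Real.exp (2 * β * η k a ω - 2 * lam β)
            - 2 * Real.exp (β * η k a ω - lam β) + 1) ∂μ from by rw [← hfun]]
    have hX2 : Integrable (fun ω => Real.exp (2 * β * η k a ω - 2 * lam β)) μ :=
      aux_intshift hηmeas hηid hηexp (2*β) (2*lam β) k a
    have hY2 : Integrable (fun ω => 2 * Real.exp (β * η k a ω - lam β)) μ :=
      (aux_intshift hηmeas hηid hηexp β (lam β) k a).const_mul 2
    have hXY : Integrable (fun ω => Real.exp (2 * β * η k a ω - 2 * lam β)
        - 2 * Real.exp (β * η k a ω - lam β)) μ := hX2.sub hY2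
    rw [integral_add hXY (integrable_const 1), integral_sub hX2 hY2, integral_const_mul,
      aux_Eshift hηmeas hηid hηexp lam hlam (2*β) (2*lam β) k a,
      aux_Eshift hηmeas hηid hηexp lam hlam β (lam β) k a, integral_const]
    simp only [probReal_univ, measure_univ, ENNReal.toReal_one, one_smul, sub_self, Real.exp_zero]
    rw [hκ2, hlam2]; ring
  · simp only [hab, if_false, mul_zero]
    have hne : ((k, a) : ℕ × (Fin d → ℤ)) ≠ (k, b') := by simp [hab]
    have hφ : Measurable fun y : ℝ => Real.exp (β * y - lam β) - 1 :=
      (((measurable_id.const_mul β).sub_const _).exp).sub_const 1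
    have hIndep : IndepFun (fun ω => Real.exp (β * η k a ω - lam β) - 1)
        (fun ω => Real.exp (β * η k b' ω - lam β) - 1) μ :=
      (hηindep.indepFun hne).comp hφ hφ
    have := hIndep.integral_mul_eq_mul_integral
      (aux_intg hηmeas hηid hηexp β (lam β) k a).aestronglyMeasurable
      (aux_intg hηmeas hηid hηexp β (lam β) k b').aestronglyMeasurable
    rw [show (∫ ω, (Real.exp (β * η k a ω - lam β) - 1)
        * (Real.exp (β * η k b' ω - lam β) - 1) ∂μ) = ∫ ω, ((fun ω => Real.exp (β * η k a ω - lam β) - 1)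
        * fun ω => Real.exp (β * η k b' ω - lam β) - 1) ω ∂μ from rfl, this,
      aux_Eg1 hηmeas hηid hηexp lam hlam β k a]
    ring

lemma aux_main (hηmeas : ∀ t x, Measurable (η t x))
    (hηindep : iIndepFun
      (fun p : ℕ × (Fin d → ℤ) => η p.1 p.2) μ)
    (hηid : ∀ t x, Measure.map (η t x) μ = Measure.map (η 0 0) μ)
    (hηexp : ∀ b : ℝ, Integrable (fun ω => Real.exp (b * η 0 0 ω)) μ)
    (lam : ℝ → ℝ) (hlam : ∀ b, lam b = Real.log (∫ ω, Real.exp (b * η 0 0 ω) ∂μ))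
    (β : ℝ) (lam2 : ℝ) (hlam2 : lam2 = lam (2 * β) - 2 * lam β)
    (κ2 : ℝ) (hκ2 : κ2 = Real.exp lam2 - 1)
    (k : ℕ) (w1 w2 : ℕ → Fin d → ℤ) (a b' : Fin d → ℤ) (C : ℝ) :
    Integrable (fun ω => (C * (Real.exp (∑ t ∈ Finset.range k, (β * η t (w1 t) ω - lam β)) *
        Real.exp (∑ t ∈ Finset.range k, (β * η t (w2 t) ω - lam β)))) *
        ((Real.exp (β * η k a ω - lam β) - 1) * (Real.exp (β * η k b' ω - lam β) - 1))) μ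
    ∧ μ[(fun ω => (C * (Real.exp (∑ t ∈ Finset.range k, (β * η t (w1 t) ω - lam β)) *
        Real.exp (∑ t ∈ Finset.range k, (β * η t (w2 t) ω - lam β)))) *
        ((Real.exp (β * η k a ω - lam β) - 1) * (Real.exp (β * η k b' ω - lam β) - 1)))
      | ⨆ t ∈ Finset.range k, ⨆ x : Fin d → ℤ,
          MeasurableSpace.comap (η t x) inferInstance]
      =ᵐ[μ] fun ω => (C * (Real.exp (∑ t ∈ Finset.range k, (β * η t (w1 t) ω - lam β)) *
        Real.exp (∑ t ∈ Finset.range k, (β * η t (w2 t) ω - lam β)))) *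
        (κ2 * (if a = b' then 1 else 0)) := by
  classical
  have h𝒢le : (⨆ t ∈ Finset.range k, ⨆ x : Fin d → ℤ,
      MeasurableSpace.comap (η t x) inferInstance) ≤ (inferInstance : MeasurableSpace Ω) :=
    iSup₂_le fun t _ => iSup_le fun x => (hηmeas t x).comap_le
  set F0 : Ω → ℝ := fun ω => Real.exp (∑ t ∈ Finset.range k, (β * η t (w1 t) ω - lam β)) *
      Real.exp (∑ t ∈ Finset.range k, (β * η t (w2 t) ω - lam β)) with hF0
  set F : Ω → ℝ := fun ω => C * F0 ω with hF
  set G : Ω → ℝ := fun ω => (Real.exp (β * η k a ω - lam β) - 1) *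
      (Real.exp (β * η k b' ω - lam β) - 1) with hG
  -- sites of the two paths
  set A1 : Finset (ℕ × (Fin d → ℤ)) := (Finset.range k).image (fun t => (t, w1 t)) with hA1
  set A2 : Finset (ℕ × (Fin d → ℤ)) := (Finset.range k).image (fun t => (t, w2 t)) with hA2
  set S1 : Finset (ℕ × (Fin d → ℤ)) := A1 ∪ A2 with hS1
  set c : ℕ × (Fin d → ℤ) → ℝ := fun p =>
    β * ((if p ∈ A1 then (1 : ℝ) else 0) + (if p ∈ A2 then (1 : ℝ) else 0)) with hc
  have himg : ∀ (w : ℕ → Fin d → ℤ) (ω : Ω),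
      ∑ p ∈ (Finset.range k).image (fun t => (t, w t)), η p.1 p.2 ω
        = ∑ t ∈ Finset.range k, η t (w t) ω := by
    intro w ω
    rw [Finset.sum_image (fun x _ y _ h => (Prod.ext_iff.mp h).1)]
  have hsplit : ∀ (A : Finset (ℕ × (Fin d → ℤ))), A ⊆ S1 → ∀ ω : Ω,
      ∑ p ∈ S1, (if p ∈ A then (1 : ℝ) else 0) * η p.1 p.2 ω = ∑ p ∈ A, η p.1 p.2 ω := by
    intro A hA ω
    simp only [ite_mul, one_mul, zero_mul]
    rw [Finset.sum_ite_mem, Finset.inter_eq_right.mpr hA]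
  have hsum : ∀ ω : Ω, ∑ p ∈ S1, c p * η p.1 p.2 ω
      = β * (∑ t ∈ Finset.range k, η t (w1 t) ω)
        + β * (∑ t ∈ Finset.range k, η t (w2 t) ω) := by
    intro ω
    have hper : ∀ p : ℕ × (Fin d → ℤ), c p * η p.1 p.2 ω
        = β * ((if p ∈ A1 then (1 : ℝ) else 0) * η p.1 p.2 ω)
          + β * ((if p ∈ A2 then (1 : ℝ) else 0) * η p.1 p.2 ω) := by
      intro p; rw [hc]; ring
    rw [Finset.sum_congr rfl fun p _ => hper p, Finset.sum_add_distrib,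
      ← Finset.mul_sum, ← Finset.mul_sum, hsplit A1 Finset.subset_union_left ω,
      hsplit A2 Finset.subset_union_right ω, hA1, hA2, himg w1 ω, himg w2 ω]
  have hsumconst : ∀ (w : ℕ → Fin d → ℤ) (ω : Ω),
      ∑ t ∈ Finset.range k, (β * η t (w t) ω - lam β)
        = β * (∑ t ∈ Finset.range k, η t (w t) ω) - k * lam β := by
    intro w ω
    rw [Finset.sum_sub_distrib, ← Finset.mul_sum, Finset.sum_const, Finset.card_range,
      nsmul_eq_mul]
  have hF0rep : F0 = fun ω => Real.exp (-(2 * (k : ℝ) * lam β)) *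
      Real.exp (∑ p ∈ S1, c p * η p.1 p.2 ω) := by
    funext ω
    simp only [hF0]
    rw [← Real.exp_add, ← Real.exp_add, hsum ω, hsumconst w1 ω, hsumconst w2 ω]
    congr 1
    ring
  have hF0int : Integrable F0 μ := by
    rw [hF0rep]
    exact (aux_intExp hηmeas hηindep hηid hηexp S1 c).const_mul _
  -- integrability of G
  have hGint : Integrable G μ := by
    by_cases hab : a = b'
    · subst hab
      have hfun : G = fun ω => Real.exp (2 * β * η k a ω - 2 * lam β)
            - 2 * Real.exp (β * η k a ω - lam β) + 1 := by
        funext ω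
        simp only [hG]
        have h2 : Real.exp (2 * β * η k a ω - 2 * lam β)
            = Real.exp (β * η k a ω - lam β) * Real.exp (β * η k a ω - lam β) := by
          rw [← Real.exp_add]; ring_nf
        rw [h2]; ring
      rw [hfun]
      exact ((aux_intshift hηmeas hηid hηexp (2 * β) (2 * lam β) k a).sub
        ((aux_intshift hηmeas hηid hηexp β (lam β) k a).const_mul 2)).add (integrable_const 1)
    · have hne : ((k, a) : ℕ × (Fin d → ℤ)) ≠ (k, b') := by simp [hab]
      have hφ : Measurable fun y : ℝ => Real.exp (β * y - lam β) - 1 :=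
        (((measurable_id.const_mul β).sub_const _).exp).sub_const 1
      have hIndep : IndepFun (fun ω => Real.exp (β * η k a ω - lam β) - 1)
          (fun ω => Real.exp (β * η k b' ω - lam β) - 1) μ :=
        (hηindep.indepFun hne).comp hφ hφ
      exact hIndep.integrable_mul (aux_intg hηmeas hηid hηexp β (lam β) k a)
        (aux_intg hηmeas hηid hηexp β (lam β) k b')
  -- disjointness of the site sets
  have hS1lt : ∀ p ∈ S1, p.1 < k := by
    intro p hp
    rw [hS1, Finset.mem_union] at hp
    rcases hp with hp | hp
    · rw [hA1] at hp
      obtain ⟨t, ht, rfl⟩ := Finset.mem_image.mp hp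
      exact Finset.mem_range.mp ht
    · rw [hA2] at hp
      obtain ⟨t, ht, rfl⟩ := Finset.mem_image.mp hp
      exact Finset.mem_range.mp ht
  set S2 : Finset (ℕ × (Fin d → ℤ)) := {(k, a), (k, b')} with hS2
  have hS2k : ∀ p ∈ S2, p.1 = k := by
    intro p hp
    rw [hS2] at hp
    rcases Finset.mem_insert.mp hp with rfl | hp
    · rfl
    · rw [Finset.mem_singleton] at hp; rw [hp]
  have hdisj : Disjoint S1 S2 := by
    rw [Finset.disjoint_left]
    intro p hp1 hp2
    have h1 := hS1lt p hp1
    have h2 := hS2k p hp2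
    omega
  have hmemS2a : ((k, a) : ℕ × (Fin d → ℤ)) ∈ S2 := by
    rw [hS2]; exact Finset.mem_insert_self _ _
  have hmemS2b : ((k, b') : ℕ × (Fin d → ℤ)) ∈ S2 := by rw [hS2]; simp
  have hmem1 : ∀ t : {x // x ∈ Finset.range k}, ((t : ℕ), w1 (t : ℕ)) ∈ S1 := fun t => by
    rw [hS1]
    exact Finset.mem_union_left _ (by rw [hA1]; exact Finset.mem_image_of_mem _ t.2)
  have hmem2 : ∀ t : {x // x ∈ Finset.range k}, ((t : ℕ), w2 (t : ℕ)) ∈ S1 := fun t => by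
    rw [hS1]
    exact Finset.mem_union_right _ (by rw [hA2]; exact Finset.mem_image_of_mem _ t.2)
  -- independence of F0 and G
  have hIndepF0G : IndepFun F0 G μ := by
    have hXY := hηindep.indepFun_finset S1 S2 hdisj (fun p => hηmeas p.1 p.2)
    set Φ : ({p : ℕ × (Fin d → ℤ) // p ∈ S1} → ℝ) → ℝ := fun y =>
      Real.exp (∑ t ∈ (Finset.range k).attach,
        (β * y ⟨((t : ℕ), w1 (t : ℕ)), hmem1 t⟩ - lam β)) *
      Real.exp (∑ t ∈ (Finset.range k).attach,
        (β * y ⟨((t : ℕ), w2 (t : ℕ)), hmem2 t⟩ - lam β)) with hΦ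
    set Ψ : ({p : ℕ × (Fin d → ℤ) // p ∈ S2} → ℝ) → ℝ := fun y =>
      (Real.exp (β * y ⟨(k, a), hmemS2a⟩ - lam β) - 1) *
      (Real.exp (β * y ⟨(k, b'), hmemS2b⟩ - lam β) - 1) with hΨ
    have hsum1 : Measurable fun y : {p : ℕ × (Fin d → ℤ) // p ∈ S1} → ℝ =>
        ∑ t ∈ (Finset.range k).attach, (β * y ⟨((t : ℕ), w1 (t : ℕ)), hmem1 t⟩ - lam β) :=
      Finset.measurable_fun_sum _ (fun t _ => by fun_prop)
    have hsum2 : Measurable fun y : {p : ℕ × (Fin d → ℤ) // p ∈ S1} → ℝ =>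
        ∑ t ∈ (Finset.range k).attach, (β * y ⟨((t : ℕ), w2 (t : ℕ)), hmem2 t⟩ - lam β) :=
      Finset.measurable_fun_sum _ (fun t _ => by fun_prop)
    have hya : Measurable fun y : {p : ℕ × (Fin d → ℤ) // p ∈ S2} → ℝ =>
        Real.exp (β * y ⟨(k, a), hmemS2a⟩ - lam β) - 1 := by
      fun_prop
    have hyb : Measurable fun y : {p : ℕ × (Fin d → ℤ) // p ∈ S2} → ℝ =>
        Real.exp (β * y ⟨(k, b'), hmemS2b⟩ - lam β) - 1 := by
      fun_prop
    have hΦm : Measurable Φ := by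
      rw [hΦ]; exact hsum1.exp.mul hsum2.exp
    have hΨm : Measurable Ψ := by
      rw [hΨ]; exact hya.mul hyb
    have h := hXY.comp hΦm hΨm
    have e1 : (Φ ∘ fun ω (i : {p : ℕ × (Fin d → ℤ) // p ∈ S1}) =>
        η (i : ℕ × (Fin d → ℤ)).1 (i : ℕ × (Fin d → ℤ)).2 ω) = F0 := by
      funext ω
      simp only [Function.comp_apply, hΦ, hF0]
      congr 1
      · congr 1
        exact Finset.sum_attach (Finset.range k) (fun t => β * η t (w1 t) ω - lam β)
      · congr 1
        exact Finset.sum_attach (Finset.range k) (fun t => β * η t (w2 t) ω - lam β)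
    have e2 : (Ψ ∘ fun ω (i : {p : ℕ × (Fin d → ℤ) // p ∈ S2}) =>
        η (i : ℕ × (Fin d → ℤ)).1 (i : ℕ × (Fin d → ℤ)).2 ω) = G := by
      funext ω
      simp only [Function.comp_apply, hΨ, hG]
    rwa [e1, e2] at h
  -- independence of the time-k sites from the sigma-algebra of the past
  have hcomaple : ∀ p : ℕ × (Fin d → ℤ),
      MeasurableSpace.comap (η p.1 p.2) inferInstance ≤ (inferInstance : MeasurableSpace Ω) :=
    fun p => (hηmeas p.1 p.2).comap_le
  have h𝒢eq : (⨆ t ∈ Finset.range k, ⨆ x : Fin d → ℤ,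
        MeasurableSpace.comap (η t x) inferInstance)
      = ⨆ p ∈ {p : ℕ × (Fin d → ℤ) | p.1 < k},
          MeasurableSpace.comap (η p.1 p.2) inferInstance := by
    apply le_antisymm
    · refine iSup₂_le fun t ht => iSup_le fun x => ?_
      exact le_biSup
        (fun p : ℕ × (Fin d → ℤ) => MeasurableSpace.comap (η p.1 p.2) inferInstance)
        (show ((t, x) : ℕ × (Fin d → ℤ)) ∈ {p : ℕ × (Fin d → ℤ) | p.1 < k} from
          Finset.mem_range.mp ht)
    · refine iSup₂_le fun p hp => ?_
      refine le_trans (le_iSup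
        (fun x : Fin d → ℤ => MeasurableSpace.comap (η p.1 x) inferInstance) p.2) ?_
      exact le_iSup₂ (f := fun (t : ℕ) (_ : t ∈ Finset.range k) =>
        ⨆ x : Fin d → ℤ, MeasurableSpace.comap (η t x) inferInstance) p.1
        (Finset.mem_range.mpr hp)
  have hIndepG𝒢 : Indep
      (⨆ p ∈ (↑S2 : Set (ℕ × (Fin d → ℤ))),
        MeasurableSpace.comap (η p.1 p.2) inferInstance)
      (⨆ t ∈ Finset.range k, ⨆ x : Fin d → ℤ,
        MeasurableSpace.comap (η t x) inferInstance) μ := by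
    rw [h𝒢eq]
    refine indep_iSup_of_disjoint hcomaple hηindep.iIndep ?_
    rw [Set.disjoint_left]
    intro p hp1 hp2
    simp only [Set.mem_setOf_eq] at hp2
    have h2 : p.1 = k := hS2k p hp1
    omega
  have hGsm : StronglyMeasurable[⨆ p ∈ (↑S2 : Set (ℕ × (Fin d → ℤ))),
      MeasurableSpace.comap (η p.1 p.2) inferInstance] G := by
    apply Measurable.stronglyMeasurable
    have ha : Measurable[⨆ p ∈ (↑S2 : Set (ℕ × (Fin d → ℤ))),
        MeasurableSpace.comap (η p.1 p.2) inferInstance] (η k a) :=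
      Measurable.of_comap_le (le_biSup
        (fun p : ℕ × (Fin d → ℤ) => MeasurableSpace.comap (η p.1 p.2) inferInstance)
        (show ((k, a) : ℕ × (Fin d → ℤ)) ∈ (↑S2 : Set (ℕ × (Fin d → ℤ))) from hmemS2a))
    have hb : Measurable[⨆ p ∈ (↑S2 : Set (ℕ × (Fin d → ℤ))),
        MeasurableSpace.comap (η p.1 p.2) inferInstance] (η k b') :=
      Measurable.of_comap_le (le_biSup
        (fun p : ℕ × (Fin d → ℤ) => MeasurableSpace.comap (η p.1 p.2) inferInstance)
        (show ((k, b') : ℕ × (Fin d → ℤ)) ∈ (↑S2 : Set (ℕ × (Fin d → ℤ))) from hmemS2b))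
    rw [hG]
    exact ((((ha.const_mul β).sub_const _).exp).sub_const 1).mul
      ((((hb.const_mul β).sub_const _).exp).sub_const 1)
  haveI hfin : IsFiniteMeasure (μ.trim h𝒢le) := isFiniteMeasure_trim h𝒢le
  have hsup_le : (⨆ p ∈ (↑S2 : Set (ℕ × (Fin d → ℤ))),
      MeasurableSpace.comap (η p.1 p.2) inferInstance)
      ≤ (inferInstance : MeasurableSpace Ω) := iSup₂_le fun p _ => hcomaple p
  have hcondG : μ[G | ⨆ t ∈ Finset.range k, ⨆ x : Fin d → ℤ,
      MeasurableSpace.comap (η t x) inferInstance] =ᵐ[μ] fun _ => μ[G] :=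
    condExp_indep_eq hsup_le h𝒢le hGsm hIndepG𝒢
  have hEGval : μ[G] = κ2 * (if a = b' then 1 else 0) := by
    rw [hG]
    exact aux_Eg hηmeas hηindep hηid hηexp lam hlam β lam2 hlam2 κ2 hκ2 k a b'
  -- strong measurability of F with respect to the past
  have hFsm : StronglyMeasurable[⨆ t ∈ Finset.range k, ⨆ x : Fin d → ℤ,
      MeasurableSpace.comap (η t x) inferInstance] F := by
    apply Measurable.stronglyMeasurable
    have hmeasη : ∀ (t : ℕ) (x : Fin d → ℤ), t < k →
        Measurable[⨆ t ∈ Finset.range k, ⨆ x : Fin d → ℤ,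
          MeasurableSpace.comap (η t x) inferInstance] (η t x) := by
      intro t x ht
      apply Measurable.of_comap_le
      refine le_trans (le_iSup
        (fun x : Fin d → ℤ => MeasurableSpace.comap (η t x) inferInstance) x) ?_
      exact le_iSup₂ (f := fun (t : ℕ) (_ : t ∈ Finset.range k) =>
        ⨆ x : Fin d → ℤ, MeasurableSpace.comap (η t x) inferInstance) t
        (Finset.mem_range.mpr ht)
    simp only [hF, hF0]
    refine Measurable.const_mul ?_ C
    exact ((Finset.measurable_fun_sum _ fun t ht =>
        ((hmeasη t (w1 t) (Finset.mem_range.mp ht)).const_mul β).sub_const _).exp).mul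
      ((Finset.measurable_fun_sum _ fun t ht =>
        ((hmeasη t (w2 t) (Finset.mem_range.mp ht)).const_mul β).sub_const _).exp)
  -- integrability of the product
  have hprodint : Integrable (F0 * G) μ := hIndepF0G.integrable_mul hF0int hGint
  have hFGint : Integrable (F * G) μ := by
    have hfg : F * G = fun ω => C * ((F0 * G) ω) := by
      funext ω; simp only [hF, Pi.mul_apply]; ring
    rw [hfg]; exact hprodint.const_mul C
  have hpull := condExp_mul_of_stronglyMeasurable_left hFsm hFGint hGint
  have hgoalfun : (fun ω => (C * (Real.exp (∑ t ∈ Finset.range k, (β * η t (w1 t) ω - lam β)) *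
        Real.exp (∑ t ∈ Finset.range k, (β * η t (w2 t) ω - lam β)))) *
        ((Real.exp (β * η k a ω - lam β) - 1) * (Real.exp (β * η k b' ω - lam β) - 1)))
      = F * G := by
    funext ω; simp only [hF, hF0, hG, Pi.mul_apply]
  have heq2 : F * (fun _ : Ω => μ[G])
      = fun ω => (C * (Real.exp (∑ t ∈ Finset.range k, (β * η t (w1 t) ω - lam β)) *
        Real.exp (∑ t ∈ Finset.range k, (β * η t (w2 t) ω - lam β)))) *
        (κ2 * (if a = b' then 1 else 0)) := by
    funext ω
    simp only [hF, hF0, Pi.mul_apply, hEGval]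
  constructor
  · rw [hgoalfun]; exact hFGint
  · rw [hgoalfun, ← heq2]
    exact hpull.trans (EventuallyEq.rfl.mul hcondG)

/-- `S` is a nearest-neighbor symmetric simple random walk on `ℤ^d` started at `x0`,
under the probability measure `μ`: it has independent increments, each increment being
uniformly distributed on the `2d` unit vectors. -/
def IsSRWFrom (d : ℕ) {Ω : Type} [MeasurableSpace Ω] (μ : Measure Ω)
    (S : ℕ → Ω → (Fin d → ℤ)) (x0 : Fin d → ℤ) : Prop :=
  (∀ n, Measurable (S n)) ∧ (∀ᵐ ω ∂μ, S 0 ω = x0) ∧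
  iIndepFun (fun n ω => S (n + 1) ω - S n ω) μ ∧
  ∀ n x, μ {ω | S (n + 1) ω - S n ω = x} =
    if (∑ i, (x i).natAbs) = 1 then ((2 * d : ℝ≥0∞))⁻¹ else 0


/-- Conditional variance of the polymer martingale differences:
`E[D_{k+1}² | 𝒢_k] = κ₂ P^{⊗2}[e^{h_k(S)} e^{h_k(S̃)} 1{S_k = S̃_k}]`. -/
theorem conditional_variance_of_differences
    (d : ℕ) (hd : 3 ≤ d)
    {Ω : Type} [MeasurableSpace Ω] (μ : Measure Ω) [IsProbabilityMeasure μ]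
    (η : ℕ → (Fin d → ℤ) → Ω → ℝ)
    (hηmeas : ∀ t x, Measurable (η t x))
    (hηindep : iIndepFun
      (fun p : ℕ × (Fin d → ℤ) => η p.1 p.2) μ)
    (hηid : ∀ t x, Measure.map (η t x) μ = Measure.map (η 0 0) μ)
    (hηexp : ∀ b : ℝ, Integrable (fun ω => Real.exp (b * η 0 0 ω)) μ)
    (lam : ℝ → ℝ) (hlam : ∀ b, lam b = Real.log (∫ ω, Real.exp (b * η 0 0 ω) ∂μ))
    (P : Measure (ℕ → Fin d → ℤ)) [IsProbabilityMeasure P]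
    (hP : IsSRWFrom d P (fun n γ => γ n) 0)
    (β : ℝ) (W : ℕ → Ω → ℝ)
    (hW : ∀ n ω, W n ω =
      ∫ γ, Real.exp (β * (∑ t ∈ Finset.range n, η t (γ t) ω) - n * lam β) ∂P)
    (lam2 : ℝ) (hlam2 : lam2 = lam (2 * β) - 2 * lam β)
    (κ2 : ℝ) (hκ2 : κ2 = Real.exp lam2 - 1)
    (k : ℕ) :
    μ[fun ω => (W (k + 1) ω - W k ω) ^ 2 |
        ⨆ t ∈ Finset.range k, ⨆ x : Fin d → ℤ,
          MeasurableSpace.comap (η t x) inferInstance]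
      =ᵐ[μ] fun ω => κ2 * ∫ p,
        Real.exp ((∑ i ∈ Finset.range k, (β * η i (p.1 i) ω - lam β)) +
            (∑ i ∈ Finset.range k, (β * η i (p.2 i) ω - lam β))) *
          (if p.1 k = p.2 k then (1 : ℝ) else 0) ∂(P.prod P) := by
  classical
  obtain ⟨hSmeas, hS0, hSinc, hSstep⟩ := hP
  -- the space of path segments
  set V : (ℕ → Fin d → ℤ) → (Fin (k+1) → Fin d → ℤ) := fun γ j => γ (j : ℕ) with hVdef
  have hV : Measurable V := measurable_pi_lambda _ fun j => measurable_pi_apply _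
  set ν : Measure (Fin (k+1) → Fin d → ℤ) := P.map V with hν
  haveI : IsProbabilityMeasure ν := Measure.isProbabilityMeasure_map hV.aemeasurable
  set T : Finset (Fin (k+1) → Fin d → ℤ) :=
    Finset.Icc (fun _ _ => -(k : ℤ)) (fun _ _ => (k : ℤ)) with hT
  set wgt : (Fin (k+1) → Fin d → ℤ) → ℝ := fun v => (ν {v}).toReal with hwgt
  set e : (Fin (k+1) → Fin d → ℤ) → ℕ → (Fin d → ℤ) :=
    fun v t => if h : t < k+1 then v ⟨t, h⟩ else 0 with he
  have heV : ∀ (γ : ℕ → Fin d → ℤ) (t : ℕ), t < k+1 → e (V γ) t = γ t := by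
    intro γ t ht
    simp [he, hVdef, ht]
    intro h; omega
  -- a.s. the increments are unit steps
  have hinc : ∀ n : ℕ, ∀ᵐ γ ∂P, (∑ i, ((γ (n+1) - γ n) i).natAbs) = 1 := by
    intro n
    rw [ae_iff]
    have hsub : {γ : ℕ → Fin d → ℤ | ¬ (∑ i, ((γ (n+1) - γ n) i).natAbs) = 1}
        ⊆ ⋃ x ∈ {x : Fin d → ℤ | ¬ (∑ i, (x i).natAbs) = 1},
            {γ : ℕ → Fin d → ℤ | γ (n+1) - γ n = x} := by
      intro γ hγ
      exact Set.mem_biUnion hγ rfl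
    refine measure_mono_null hsub ?_
    refine (measure_biUnion_null_iff (Set.to_countable _)).mpr ?_
    intro x hx
    simp only [Set.mem_setOf_eq] at hx
    have h := hSstep n x
    rw [if_neg hx] at h
    exact h
  -- a.s. the path up to time k is in T
  have hboundae : ∀ᵐ γ ∂P, V γ ∈ T := by
    have hall : ∀ᵐ γ ∂P, (γ 0 = (0 : Fin d → ℤ)
        ∧ ∀ n, (∑ i, ((γ (n+1) - γ n) i).natAbs) = 1) :=
      hS0.and (ae_all_iff.mpr hinc)
    filter_upwards [hall] with γ hγ
    have key : ∀ j : ℕ, (∑ i, (γ j i).natAbs) ≤ j := by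
      intro j
      induction j with
      | zero => simp [hγ.1]
      | succ n ih =>
        have h1 := hγ.2 n
        have h2 : ∀ i, (γ (n+1) i).natAbs ≤ (γ n i).natAbs + ((γ (n+1) - γ n) i).natAbs := by
          intro i
          have h3 : γ (n+1) i = γ n i + (γ (n+1) - γ n) i := by simp
          rw [h3]
          exact Int.natAbs_add_le _ _
        calc (∑ i, (γ (n+1) i).natAbs)
            ≤ ∑ i, ((γ n i).natAbs + ((γ (n+1) - γ n) i).natAbs) :=
              Finset.sum_le_sum fun i _ => h2 i
          _ = (∑ i, (γ n i).natAbs) + (∑ i, ((γ (n+1) - γ n) i).natAbs) :=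
              Finset.sum_add_distrib
          _ ≤ n + 1 := by omega
    have hcoord : ∀ (j : ℕ), j ≤ k → ∀ i, ((γ j i).natAbs : ℤ) ≤ (k : ℤ) := by
      intro j hj i
      have h3 : (γ j i).natAbs ≤ j :=
        le_trans (Finset.single_le_sum (f := fun i : Fin d => (γ j i).natAbs)
          (fun i _ => Nat.zero_le _) (Finset.mem_univ i)) (key j)
      exact_mod_cast le_trans h3 hj
    rw [hT, Finset.mem_Icc]
    constructor
    · intro j
      intro i
      have habs : |γ (j : ℕ) i| ≤ (k : ℤ) := by
        rw [Int.abs_eq_natAbs]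
        exact hcoord j (by omega) i
      have := (abs_le.mp habs).1
      simpa [hVdef] using this
    · intro j
      intro i
      have habs : |γ (j : ℕ) i| ≤ (k : ℤ) := by
        rw [Int.abs_eq_natAbs]
        exact hcoord j (by omega) i
      have := (abs_le.mp habs).2
      simpa [hVdef] using this
  have hsupp : ν ((↑T : Set (Fin (k+1) → Fin d → ℤ))ᶜ) = 0 := by
    rw [hν, Measure.map_apply hV MeasurableSet.of_discrete]
    rw [ae_iff] at hboundae
    exact measure_mono_null (fun γ h => h) hboundae
  -- reduction of path integrals to finite sums
  have hPint : ∀ f : (Fin (k+1) → Fin d → ℤ) → ℝ,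
      ∫ γ, f (V γ) ∂P = ∑ v ∈ T, wgt v * f v := by
    intro f
    rw [← integral_map hV.aemeasurable (measurable_of_countable f).aestronglyMeasurable]
    exact integral_eq_sum_of_ae_finset (P.map V) T hsupp f
  have hsupp2 : (ν.prod ν) ((↑(T ×ˢ T) :
      Set ((Fin (k+1) → Fin d → ℤ) × (Fin (k+1) → Fin d → ℤ)))ᶜ) = 0 := by
    rw [Finset.coe_product, Set.compl_prod_eq_union]
    refine measure_union_null ?_ ?_ <;> rw [Measure.prod_prod] <;>
      simp [hsupp]
  have hPPint : ∀ F : ((Fin (k+1) → Fin d → ℤ) × (Fin (k+1) → Fin d → ℤ)) → ℝ,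
      ∫ p, F (V p.1, V p.2) ∂(P.prod P) = ∑ v ∈ T, ∑ u ∈ T, wgt v * (wgt u * F (v, u)) := by
    intro F
    have h1 : ∫ p, F (V p.1, V p.2) ∂(P.prod P) = ∫ q, F q ∂(ν.prod ν) := by
      rw [hν, Measure.map_prod_map _ _ hV hV,
        integral_map (hV.prodMap hV).aemeasurable
          (measurable_of_countable F).aestronglyMeasurable]
      rfl
    rw [h1, integral_eq_sum_of_ae_finset _ (T ×ˢ T) hsupp2 F, Finset.sum_product]
    refine Finset.sum_congr rfl fun v _ => Finset.sum_congr rfl fun u _ => ?_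
    rw [← Set.singleton_prod_singleton, Measure.prod_prod, ENNReal.toReal_mul]
    simp only [hwgt]
    ring
  -- reduction of W to a finite sum
  have hW' : ∀ n, n ≤ k+1 → ∀ ω, W n ω = ∑ v ∈ T, wgt v *
      Real.exp (β * (∑ t ∈ Finset.range n, η t (e v t) ω) - n * lam β) := by
    intro n hn ω
    rw [hW n ω]
    have hfeq : (fun γ : ℕ → Fin d → ℤ =>
        Real.exp (β * (∑ t ∈ Finset.range n, η t (γ t) ω) - n * lam β))
        = fun γ => (fun v => Real.exp
            (β * (∑ t ∈ Finset.range n, η t (e v t) ω) - n * lam β)) (V γ) := by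
      funext γ
      have hs : ∑ t ∈ Finset.range n, η t (γ t) ω
          = ∑ t ∈ Finset.range n, η t (e (V γ) t) ω :=
        Finset.sum_congr rfl fun t ht => by
          rw [heV γ t (lt_of_lt_of_le (Finset.mem_range.mp ht) hn)]
      simp only [hs]
    rw [hfeq,
      hPint (fun v => Real.exp (β * ∑ t ∈ Finset.range n, η t (e v t) ω - ↑n * lam β))]
  -- the martingale difference as a finite sum
  have hD : ∀ ω, W (k+1) ω - W k ω
      = ∑ v ∈ T, wgt v * (Real.exp (∑ t ∈ Finset.range k, (β * η t (e v t) ω - lam β))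
          * (Real.exp (β * η k (e v k) ω - lam β) - 1)) := by
    intro ω
    rw [hW' (k+1) le_rfl ω, hW' k (Nat.le_succ k) ω, ← Finset.sum_sub_distrib]
    refine Finset.sum_congr rfl fun v _ => ?_
    rw [← mul_sub]
    congr 1
    have hsumconst : ∀ m : ℕ, ∑ t ∈ Finset.range m, (β * η t (e v t) ω - lam β)
        = β * (∑ t ∈ Finset.range m, η t (e v t) ω) - m * lam β := by
      intro m
      rw [Finset.sum_sub_distrib, ← Finset.mul_sum, Finset.sum_const, Finset.card_range,
        nsmul_eq_mul]
    have hstep : β * (∑ t ∈ Finset.range (k+1), η t (e v t) ω) - ((k+1 : ℕ) : ℝ) * lam β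
        = (∑ t ∈ Finset.range k, (β * η t (e v t) ω - lam β))
          + (β * η k (e v k) ω - lam β) := by
      rw [Finset.sum_range_succ, hsumconst k]
      push_cast
      ring
    rw [hstep, Real.exp_add, ← hsumconst k]
    ring
  -- per-term conditional expectation via the auxiliary lemma
  have hterm := fun (v u : Fin (k+1) → Fin d → ℤ) =>
    aux_main hηmeas hηindep hηid hηexp lam hlam β lam2 hlam2 κ2 hκ2 k
      (e v) (e u) (e v k) (e u k) (wgt v * wgt u)
  set Z : ((Fin (k+1) → Fin d → ℤ) × (Fin (k+1) → Fin d → ℤ)) → Ω → ℝ := fun p ω =>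
    ((wgt p.1 * wgt p.2) * (Real.exp (∑ t ∈ Finset.range k, (β * η t (e p.1 t) ω - lam β)) *
        Real.exp (∑ t ∈ Finset.range k, (β * η t (e p.2 t) ω - lam β)))) *
        ((Real.exp (β * η k (e p.1 k) ω - lam β) - 1) *
         (Real.exp (β * η k (e p.2 k) ω - lam β) - 1)) with hZ
  set Zc : ((Fin (k+1) → Fin d → ℤ) × (Fin (k+1) → Fin d → ℤ)) → Ω → ℝ := fun p ω =>
    ((wgt p.1 * wgt p.2) * (Real.exp (∑ t ∈ Finset.range k, (β * η t (e p.1 t) ω - lam β)) *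
        Real.exp (∑ t ∈ Finset.range k, (β * η t (e p.2 t) ω - lam β)))) *
        (κ2 * (if e p.1 k = e p.2 k then 1 else 0)) with hZc
  have hZint : ∀ p, Integrable (Z p) μ := fun p => (hterm p.1 p.2).1
  have hZcond : ∀ p, μ[Z p | ⨆ t ∈ Finset.range k, ⨆ x : Fin d → ℤ,
      MeasurableSpace.comap (η t x) inferInstance] =ᵐ[μ] Zc p := fun p => (hterm p.1 p.2).2
  have hDsq : (fun ω => (W (k + 1) ω - W k ω) ^ 2) = ∑ p ∈ T ×ˢ T, Z p := by
    funext ω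
    rw [Finset.sum_apply]
    rw [hD ω, sq, Finset.sum_mul_sum]
    rw [Finset.sum_product]
    refine Finset.sum_congr rfl fun v _ => Finset.sum_congr rfl fun u _ => ?_
    simp only [hZ]
    ring
  rw [hDsq]
  refine (condExp_finsetSum (fun p _ => hZint p) _).trans ?_
  have hae2 : ∀ᵐ ω ∂μ, ∀ p ∈ T ×ˢ T, (μ[Z p | ⨆ t ∈ Finset.range k, ⨆ x : Fin d → ℤ,
      MeasurableSpace.comap (η t x) inferInstance]) ω = Zc p ω :=
    (eventually_all_finset _).mpr (fun p _ => hZcond p)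
  filter_upwards [hae2] with ω hω
  rw [Finset.sum_apply]
  rw [Finset.sum_congr rfl (fun p hp => hω p hp)]
  -- reduce the double path integral on the right-hand side
  have hRHS : (∫ p : (ℕ → Fin d → ℤ) × (ℕ → Fin d → ℤ),
      Real.exp ((∑ i ∈ Finset.range k, (β * η i (p.1 i) ω - lam β)) +
          (∑ i ∈ Finset.range k, (β * η i (p.2 i) ω - lam β))) *
        (if p.1 k = p.2 k then (1 : ℝ) else 0) ∂(P.prod P))
      = ∑ v ∈ T, ∑ u ∈ T, wgt v * (wgt u *
          (Real.exp ((∑ i ∈ Finset.range k, (β * η i (e v i) ω - lam β)) +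
            (∑ i ∈ Finset.range k, (β * η i (e u i) ω - lam β))) *
          (if e v k = e u k then (1 : ℝ) else 0))) := by
    have hfeq : (fun p : (ℕ → Fin d → ℤ) × (ℕ → Fin d → ℤ) =>
        Real.exp ((∑ i ∈ Finset.range k, (β * η i (p.1 i) ω - lam β)) +
          (∑ i ∈ Finset.range k, (β * η i (p.2 i) ω - lam β))) *
        (if p.1 k = p.2 k then (1 : ℝ) else 0))
        = fun p => (fun q : (Fin (k+1) → Fin d → ℤ) × (Fin (k+1) → Fin d → ℤ) =>
            Real.exp ((∑ i ∈ Finset.range k, (β * η i (e q.1 i) ω - lam β)) +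
              (∑ i ∈ Finset.range k, (β * η i (e q.2 i) ω - lam β))) *
            (if e q.1 k = e q.2 k then (1 : ℝ) else 0)) (V p.1, V p.2) := by
      funext p
      have h1 : ∑ i ∈ Finset.range k, (β * η i (p.1 i) ω - lam β)
          = ∑ i ∈ Finset.range k, (β * η i (e (V p.1) i) ω - lam β) :=
        Finset.sum_congr rfl fun i hi => by
          rw [heV p.1 i (by have := Finset.mem_range.mp hi; omega)]
      have h2 : ∑ i ∈ Finset.range k, (β * η i (p.2 i) ω - lam β)
          = ∑ i ∈ Finset.range k, (β * η i (e (V p.2) i) ω - lam β) :=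
        Finset.sum_congr rfl fun i hi => by
          rw [heV p.2 i (by have := Finset.mem_range.mp hi; omega)]
      have h3 : (p.1 k = p.2 k) = (e (V p.1) k = e (V p.2) k) := by
        rw [heV p.1 k (by omega), heV p.2 k (by omega)]
      simp only [h1, h2, h3]
    rw [hfeq, hPPint (fun q : (Fin (k+1) → Fin d → ℤ) × (Fin (k+1) → Fin d → ℤ) =>
      Real.exp ((∑ i ∈ Finset.range k, (β * η i (e q.1 i) ω - lam β)) +
          (∑ i ∈ Finset.range k, (β * η i (e q.2 i) ω - lam β))) *
        (if e q.1 k = e q.2 k then (1 : ℝ) else 0))]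
  rw [hRHS, Finset.mul_sum, Finset.sum_product]
  refine Finset.sum_congr rfl fun v _ => ?_
  rw [Finset.mul_sum]
  refine Finset.sum_congr rfl fun u _ => ?_
  simp only [hZc]
  rw [Real.exp_add]
  ring
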